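/- arXiv:2210.16712 — 3 statements merged into one kernel-verified Lean document; each statement's English description precedes it below -/
import Mathlib

section
/- Let H : ℝ^S → ℂ^{M×K} be continuously differentiable and define the value function v(θ) = max_{W : ‖W‖_F^2 ≤ P} F(W, H(θ)) (the maximum is attained since F(·, H(θ)) is continuous on the compact feasible ball). If v is differentiable at a point θ_0 ∈ ℝ^S, then for every maximizer W* ∈ argmax_{‖W‖_F^2 ≤ P} F(W, H(θ_0)) one has ∇v(θ_0) = ∇_θ [ F(W*, H(θ)) ] |_{θ = θ_0}; that is, the gradient of the value function equals the partial gradient of the objective with the maximizing precoder held fixed. -/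
open scoped BigOperators ComplexConjugate
open Finset MeasureTheory

noncomputable section

/-- `SINR_k(W, h)` for user `k`. -/
def SINR {M K : ℕ} (σ2k : ℝ) (W : Fin K → EuclideanSpace ℂ (Fin M))
    (h : EuclideanSpace ℂ (Fin M)) (k : Fin K) : ℝ :=
  ‖(inner ℂ h (W k) : ℂ)‖ ^ 2 /
    ((∑ j ∈ Finset.univ.erase k, ‖(inner ℂ h (W j) : ℂ)‖ ^ 2) + σ2k)

/-- Weighted sumrate `F(W, H)`. -/
def sumrateF {M K : ℕ} (α σ2 : Fin K → ℝ)
    (W H : Fin K → EuclideanSpace ℂ (Fin M)) : ℝ :=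
  ∑ k, α k * Real.logb 2 (1 + SINR (σ2 k) W (H k) k)

/-- `(m)`-th entry of the Wirtinger derivative row vector `d_k(W, H)`. -/
def Dmat {M K : ℕ} (α σ2 : Fin K → ℝ)
    (W H : Fin K → EuclideanSpace ℂ (Fin M)) (k : Fin K) (m : Fin M) : ℂ :=
  let c : ℂ := (inner ℂ (H k) (W k) : ℂ)
  let I : ℝ := ∑ j ∈ Finset.univ.erase k, ‖(inner ℂ (H k) (W j) : ℂ)‖ ^ 2
  ((α k : ℂ) * (((I + σ2 k : ℝ) : ℂ) * c * (starRingEnd ℂ) (W k m)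
      - ((‖c‖ ^ 2 : ℝ) : ℂ) *
        ∑ j ∈ Finset.univ.erase k, (inner ℂ (H k) (W j) : ℂ) * (starRingEnd ℂ) (W j m)))
    / ((Real.log 2 * ((I + σ2 k) ^ 2 + ‖c‖ ^ 2 * (I + σ2 k)) : ℝ) : ℂ)

/-- Frobenius norm of `D(W,H)`. -/
def normD {M K : ℕ} (α σ2 : Fin K → ℝ)
    (W H : Fin K → EuclideanSpace ℂ (Fin M)) : ℝ :=
  Real.sqrt (∑ k, ∑ m, ‖Dmat α σ2 W H k m‖ ^ 2)

/-- Frobenius norm of a channel matrix given by its columns. -/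
def frobNorm {M K : ℕ} (H : Fin K → EuclideanSpace ℂ (Fin M)) : ℝ :=
  Real.sqrt (∑ k, ‖H k‖ ^ 2)

lemma sinr_nonneg {M K : ℕ} (σ2k : ℝ) (hσ : 0 < σ2k)
    (W : Fin K → EuclideanSpace ℂ (Fin M)) (h : EuclideanSpace ℂ (Fin M)) (k : Fin K) :
    0 ≤ SINR σ2k W h k := by
  apply div_nonneg (by positivity)
  have : (0:ℝ) ≤ ∑ j ∈ Finset.univ.erase k, ‖(inner ℂ h (W j) : ℂ)‖ ^ 2 :=
    Finset.sum_nonneg fun j _ => by positivity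
  linarith

lemma sumrate_diff {M K S : ℕ} (α σ2 : Fin K → ℝ) (hσ : ∀ k, 0 < σ2 k)
    (W : Fin K → EuclideanSpace ℂ (Fin M))
    (Hfun : EuclideanSpace ℝ (Fin S) → Fin K → EuclideanSpace ℂ (Fin M))
    (hHfun : ContDiff ℝ 1 Hfun) (θ0 : EuclideanSpace ℝ (Fin S)) :
    DifferentiableAt ℝ (fun θ => sumrateF α σ2 W (Hfun θ)) θ0 := by
  unfold sumrateF
  apply DifferentiableAt.fun_sum
  intro k _
  apply DifferentiableAt.const_mul
  have hsq : ∀ j : Fin K,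
      DifferentiableAt ℝ (fun θ => ‖(inner ℂ (Hfun θ k) (W j) : ℂ)‖ ^ 2) θ0 := by
    intro j
    have h1 : DifferentiableAt ℝ (fun θ => Hfun θ k) θ0 := by
      have := (hHfun.differentiable one_ne_zero).differentiableAt (x := θ0)
      exact ((ContinuousLinearMap.proj (R := ℝ)
        (φ := fun _ : Fin K => EuclideanSpace ℂ (Fin M)) k).differentiableAt).comp θ0 this
    have h2 : DifferentiableAt ℝ
        (fun θ => (inner ℂ (W j) (Hfun θ k) : ℂ)) θ0 :=
      (((innerSL ℂ (W j)).restrictScalars ℝ).differentiableAt).comp θ0 h1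
    have h3 : DifferentiableAt ℝ (fun θ => ‖(inner ℂ (W j) (Hfun θ k) : ℂ)‖ ^ 2) θ0 :=
      h2.norm_sq ℝ
    convert h3 using 2 with θ
    rw [norm_inner_symm]
  have hI : DifferentiableAt ℝ
      (fun θ => (∑ j ∈ Finset.univ.erase k, ‖(inner ℂ (Hfun θ k) (W j) : ℂ)‖ ^ 2) + σ2 k) θ0 :=
    (DifferentiableAt.fun_sum fun j _ => hsq j).add_const _
  have hIpos : ∀ θ, 0 < (∑ j ∈ Finset.univ.erase k, ‖(inner ℂ (Hfun θ k) (W j) : ℂ)‖ ^ 2) + σ2 k := by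
    intro θ
    have : (0:ℝ) ≤ ∑ j ∈ Finset.univ.erase k, ‖(inner ℂ (Hfun θ k) (W j) : ℂ)‖ ^ 2 :=
      Finset.sum_nonneg fun j _ => by positivity
    linarith [hσ k]
  have hsinr : DifferentiableAt ℝ (fun θ => SINR (σ2 k) W (Hfun θ k) k) θ0 := by
    have h4 : DifferentiableAt ℝ (fun θ => ‖(inner ℂ (Hfun θ k) (W k) : ℂ)‖ ^ 2 /
        ((∑ j ∈ Finset.univ.erase k, ‖(inner ℂ (Hfun θ k) (W j) : ℂ)‖ ^ 2) + σ2 k)) θ0 :=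
      by
      simp only [div_eq_mul_inv]
      exact (hsq k).mul (hI.inv (ne_of_gt (hIpos θ0)))
    simpa [SINR] using h4
  have harg : DifferentiableAt ℝ (fun θ => 1 + SINR (σ2 k) W (Hfun θ k) k) θ0 :=
    (hsinr.const_add 1)
  have hpos : (0:ℝ) < 1 + SINR (σ2 k) W (Hfun θ0 k) k := by
    linarith [sinr_nonneg (σ2 k) (hσ k) W (Hfun θ0 k) k]
  have : DifferentiableAt ℝ (fun θ => Real.log (1 + SINR (σ2 k) W (Hfun θ k) k)) θ0 :=
    harg.log (ne_of_gt hpos)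
  simpa [Real.logb, div_eq_mul_inv] using this.mul_const (Real.log 2)⁻¹

lemma sumrate_bound {M K : ℕ} (α σ2 : Fin K → ℝ) (hα : ∀ k, 0 ≤ α k) (hσ : ∀ k, 0 < σ2 k)
    (P : ℝ) (hP : 0 < P) (W H : Fin K → EuclideanSpace ℂ (Fin M))
    (hW : ∑ k, ‖W k‖ ^ 2 ≤ P) :
    sumrateF α σ2 W H ≤ ∑ k, α k * Real.logb 2 (1 + ‖H k‖ ^ 2 * P / σ2 k) := by
  unfold sumrateF
  apply Finset.sum_le_sum
  intro k _
  apply mul_le_mul_of_nonneg_left _ (hα k)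
  have hWk : ‖W k‖ ^ 2 ≤ P :=
    le_trans (Finset.single_le_sum (f := fun j => ‖W j‖ ^ 2)
      (fun j _ => by positivity) (Finset.mem_univ k)) hW
  have hsle : SINR (σ2 k) W (H k) k ≤ ‖H k‖ ^ 2 * P / σ2 k := by
    unfold SINR
    have hI : (0:ℝ) ≤ ∑ j ∈ Finset.univ.erase k, ‖(inner ℂ (H k) (W j) : ℂ)‖ ^ 2 :=
      Finset.sum_nonneg fun j _ => by positivity
    have h1 : ‖(inner ℂ (H k) (W k) : ℂ)‖ ^ 2 /
        ((∑ j ∈ Finset.univ.erase k, ‖(inner ℂ (H k) (W j) : ℂ)‖ ^ 2) + σ2 k)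
        ≤ ‖(inner ℂ (H k) (W k) : ℂ)‖ ^ 2 / σ2 k := by
      apply div_le_div_of_nonneg_left (by positivity) (hσ k)
      linarith
    refine h1.trans ?_
    apply (div_le_div_iff_of_pos_right (hσ k)).mpr
    calc ‖(inner ℂ (H k) (W k) : ℂ)‖ ^ 2 ≤ (‖H k‖ * ‖W k‖) ^ 2 := by
          have := norm_inner_le_norm (𝕜 := ℂ) (H k) (W k)
          exact pow_le_pow_left₀ (norm_nonneg _) this 2
      _ = ‖H k‖ ^ 2 * ‖W k‖ ^ 2 := by ring
      _ ≤ ‖H k‖ ^ 2 * P := by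
          exact mul_le_mul_of_nonneg_left hWk (by positivity)
  have h0 : (0:ℝ) < 1 + SINR (σ2 k) W (H k) k := by
    linarith [sinr_nonneg (σ2 k) (hσ k) W (H k) k]
  exact Real.logb_le_logb_of_le one_lt_two h0 (by linarith)


/-- Danskin-type result — if the value function of the inner (precoding)
problem is differentiable, its gradient equals the partial gradient of the objective
with any maximizing precoder held fixed. -/
theorem fderiv_value_function_eq_fderiv_frozen_precoder
    {M K S : ℕ} (hM : 1 ≤ M) (hK : 1 ≤ K) (hS : 1 ≤ S)
    (α σ2 : Fin K → ℝ) (hα : ∀ k, 0 ≤ α k) (hσ : ∀ k, 0 < σ2 k)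
    (P : ℝ) (hP : 0 < P)
    (Hfun : EuclideanSpace ℝ (Fin S) → Fin K → EuclideanSpace ℂ (Fin M))
    (hHfun : ContDiff ℝ 1 Hfun)
    (θ0 : EuclideanSpace ℝ (Fin S))
    (hvdiff : DifferentiableAt ℝ
      (fun θ => sSup ((fun W => sumrateF α σ2 W (Hfun θ)) ''
        {W : Fin K → EuclideanSpace ℂ (Fin M) | ∑ k, ‖W k‖ ^ 2 ≤ P})) θ0)
    (Wstar : Fin K → EuclideanSpace ℂ (Fin M))
    (hfeas : ∑ k, ‖Wstar k‖ ^ 2 ≤ P)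
    (hmax : ∀ W : Fin K → EuclideanSpace ℂ (Fin M), (∑ k, ‖W k‖ ^ 2 ≤ P) →
      sumrateF α σ2 W (Hfun θ0) ≤ sumrateF α σ2 Wstar (Hfun θ0)) :
    fderiv ℝ
        (fun θ => sSup ((fun W => sumrateF α σ2 W (Hfun θ)) ''
          {W : Fin K → EuclideanSpace ℂ (Fin M) | ∑ k, ‖W k‖ ^ 2 ≤ P})) θ0
      = fderiv ℝ (fun θ => sumrateF α σ2 Wstar (Hfun θ)) θ0 := by
  set v : EuclideanSpace ℝ (Fin S) → ℝ :=
    fun θ => sSup ((fun W => sumrateF α σ2 W (Hfun θ)) ''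
      {W : Fin K → EuclideanSpace ℂ (Fin M) | ∑ k, ‖W k‖ ^ 2 ≤ P}) with hv
  set f : EuclideanSpace ℝ (Fin S) → ℝ :=
    fun θ => sumrateF α σ2 Wstar (Hfun θ) with hf
  have hfd : DifferentiableAt ℝ f θ0 := sumrate_diff α σ2 hσ Wstar Hfun hHfun θ0
  have hmemθ : ∀ θ, f θ ∈ ((fun W => sumrateF α σ2 W (Hfun θ)) ''
      {W : Fin K → EuclideanSpace ℂ (Fin M) | ∑ k, ‖W k‖ ^ 2 ≤ P}) :=
    fun θ => Set.mem_image_of_mem _ hfeas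
  have hbdd : ∀ θ, BddAbove ((fun W => sumrateF α σ2 W (Hfun θ)) ''
      {W : Fin K → EuclideanSpace ℂ (Fin M) | ∑ k, ‖W k‖ ^ 2 ≤ P}) := by
    intro θ
    refine ⟨∑ k, α k * Real.logb 2 (1 + ‖Hfun θ k‖ ^ 2 * P / σ2 k), ?_⟩
    rintro x ⟨W, hW, rfl⟩
    exact sumrate_bound α σ2 hα hσ P hP W (Hfun θ) hW
  have hle : ∀ θ, f θ ≤ v θ := fun θ => le_csSup (hbdd θ) (hmemθ θ)
  have heq : v θ0 = f θ0 := by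
    refine le_antisymm ?_ (hle θ0)
    apply csSup_le ⟨_, hmemθ θ0⟩
    rintro x ⟨W, hW, rfl⟩
    exact hmax W hW
  have hmin : IsLocalMin (fun θ => v θ - f θ) θ0 := by
    apply Filter.Eventually.of_forall
    intro θ
    have := hle θ
    simp only [heq]
    linarith
  have h0 : fderiv ℝ (fun θ => v θ - f θ) θ0 = 0 := hmin.fderiv_eq_zero
  rw [fderiv_fun_sub hvdiff hfd, sub_eq_zero] at h0
  exact h0


end
end

section
/- Let h : ℝ^S → ℝ be differentiable with L_1-Lipschitz gradient, let μ > 0, and let u ∼ N(0, I_S). Then for every θ ∈ ℝ^S, ‖ E[ ∇h(θ + μu) ] − ∇h(θ) ‖_2 ≤ μ L_1 √S. -/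
open MeasureTheory ProbabilityTheory

noncomputable section

section Aux

open Real Filter Set


lemma integrable_sq_exp : Integrable (fun x : ℝ => x ^ 2 * rexp (-x ^ 2 / 2)) := by
  have h := integrable_rpow_mul_exp_neg_mul_sq (b := (1:ℝ)/2) (by norm_num) (s := 2) (by norm_num)
  have : (fun x : ℝ => x ^ (2:ℝ) * rexp (-(1/2) * x ^ 2)) = fun x : ℝ => x ^ 2 * rexp (-x ^ 2 / 2) := by
    ext x
    rw [show (2:ℝ) = ((2:ℕ):ℝ) by norm_num, Real.rpow_natCast]
    ring_nf
  rwa [this] at h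

lemma integrable_exp_half : Integrable (fun x : ℝ => rexp (-x ^ 2 / 2)) := by
  have h := integrable_exp_neg_mul_sq (b := (1:ℝ)/2) (by norm_num)
  convert h using 2 with x
  ring_nf

lemma integral_exp_half : ∫ x : ℝ, rexp (-x ^ 2 / 2) = Real.sqrt (2 * π) := by
  have h := integral_gaussian (1/2)
  rw [show (π / (1/2)) = 2 * π by ring] at h
  rw [← h]
  congr 1 with x
  ring_nf

lemma gauss_second_moment : ∫ x : ℝ, x ^ 2 * rexp (-x ^ 2 / 2) = Real.sqrt (2 * π) := by
  set G : ℝ → ℝ := fun x => x * rexp (-x ^ 2 / 2) with hG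
  set F : ℝ → ℝ := fun x => -x * rexp (-x ^ 2 / 2) with hF
  have hderiv : ∀ x : ℝ, HasDerivAt F ((x ^ 2 - 1) * rexp (-x ^ 2 / 2)) x := by
    intro x
    have h1 : HasDerivAt (fun x : ℝ => -x ^ 2 / 2) (-x) x := by
      have := ((hasDerivAt_pow 2 x).neg).div_const 2
      simpa using this.congr_deriv (by ring)
    have h2 : HasDerivAt (fun x : ℝ => rexp (-x ^ 2 / 2)) (rexp (-x ^ 2 / 2) * (-x)) x := h1.exp
    have h3 : HasDerivAt (fun y : ℝ => -y * rexp (-y ^ 2 / 2)) (-1 * rexp (-x ^ 2 / 2) + -x * (rexp (-x ^ 2 / 2) * -x)) x := (hasDerivAt_neg x).mul h2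
    convert h3 using 1
    ring
  have hint : Integrable (fun x : ℝ => (x ^ 2 - 1) * rexp (-x ^ 2 / 2)) := by
    have := integrable_sq_exp.sub integrable_exp_half
    convert this using 2 with x
    simp only [Pi.sub_apply]
    ring
  have hGtop : Tendsto G atTop (nhds 0) := by
    have hlo := rpow_mul_exp_neg_mul_sq_isLittleO_exp_neg (b := (1:ℝ)/2) (by norm_num) 1
    have h0 : Tendsto (fun x : ℝ => rexp (-(1/2) * x)) atTop (nhds 0) := by
      rw [Real.tendsto_exp_comp_nhds_zero]
      exact Tendsto.const_mul_atTop_of_neg (by norm_num) tendsto_id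
    have h1 : Tendsto (fun x : ℝ => x ^ (1:ℝ) * rexp (-(1/2) * x ^ 2)) atTop (nhds 0) :=
      hlo.isBigO.trans_tendsto h0
    apply h1.congr'
    filter_upwards [eventually_ge_atTop (0:ℝ)] with x hx
    rw [Real.rpow_one]
    simp only [hG]
    ring_nf
  have htop : Tendsto F atTop (nhds 0) := by
    have := hGtop.neg
    rw [neg_zero] at this
    apply this.congr
    intro x
    simp only [hF, hG, neg_mul]
  have hbot : Tendsto F atBot (nhds 0) := by
    have := hGtop.comp tendsto_neg_atBot_atTop
    apply this.congr
    intro x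
    simp only [Function.comp, hG, hF]
    ring_nf
  have hIoi : ∫ x in Ioi (0:ℝ), (x ^ 2 - 1) * rexp (-x ^ 2 / 2) = 0 - F 0 :=
    integral_Ioi_of_hasDerivAt_of_tendsto' (fun x _ => hderiv x) hint.integrableOn htop
  have hIic : ∫ x in Iic (0:ℝ), (x ^ 2 - 1) * rexp (-x ^ 2 / 2) = F 0 - 0 :=
    integral_Iic_of_hasDerivAt_of_tendsto' (fun x _ => hderiv x) hint.integrableOn hbot
  have hsum := intervalIntegral.integral_Iic_add_Ioi (f := fun x : ℝ => (x ^ 2 - 1) * rexp (-x ^ 2 / 2))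
    (μ := volume) (b := 0) hint.integrableOn hint.integrableOn
  have hzero : ∫ x : ℝ, (x ^ 2 - 1) * rexp (-x ^ 2 / 2) = 0 := by
    rw [← hsum, hIoi, hIic]; ring
  have heq : ∫ x : ℝ, (x ^ 2 - 1) * rexp (-x ^ 2 / 2)
      = (∫ x : ℝ, x ^ 2 * rexp (-x ^ 2 / 2)) - ∫ x : ℝ, rexp (-x ^ 2 / 2) := by
    rw [← integral_sub integrable_sq_exp integrable_exp_half]
    congr 1 with x
    ring
  rw [heq, integral_exp_half] at hzero
  linarith



lemma pdfreal_eq (x : ℝ) : gaussianPDFReal 0 1 x = (Real.sqrt (2 * π))⁻¹ * rexp (-x ^ 2 / 2) := by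
  simp [gaussianPDFReal]

lemma gaussian_withDensity : gaussianReal 0 1
    = volume.withDensity (fun x => ((gaussianPDFReal 0 1 x).toNNReal : ENNReal)) := by
  rw [gaussianReal_of_var_ne_zero _ one_ne_zero]
  rfl

lemma smul_eq_aux : (fun x : ℝ => (gaussianPDFReal 0 1 x).toNNReal • x ^ 2)
    = fun x : ℝ => (Real.sqrt (2 * π))⁻¹ * (x ^ 2 * rexp (-x ^ 2 / 2)) := by
  ext x
  rw [NNReal.smul_def, Real.coe_toNNReal _ (gaussianPDFReal_nonneg 0 1 x), pdfreal_eq]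
  simp [smul_eq_mul]
  ring

lemma gaussian_sq_integrable : Integrable (fun t : ℝ => t ^ 2) (gaussianReal 0 1) := by
  rw [gaussian_withDensity, integrable_withDensity_iff_integrable_smul
    (measurable_gaussianPDFReal 0 1).real_toNNReal, smul_eq_aux]
  exact integrable_sq_exp.const_mul _

lemma gaussian_sq_integral : ∫ t : ℝ, t ^ 2 ∂(gaussianReal 0 1) = 1 := by
  rw [gaussian_withDensity,
    integral_withDensity_eq_integral_smul (measurable_gaussianPDFReal 0 1).real_toNNReal]
  rw [smul_eq_aux, integral_const_mul, gauss_second_moment]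
  rw [inv_mul_cancel₀]
  positivity


lemma pi_map_eval {S : ℕ} (μ : Fin S → Measure ℝ) [∀ i, IsProbabilityMeasure (μ i)] (i : Fin S) :
    (Measure.pi μ).map (Function.eval i) = μ i := by
  ext s hs
  rw [Measure.map_apply (measurable_pi_apply i) hs, Set.eval_preimage, Measure.pi_pi]
  rw [show (fun j => (μ j) (Function.update (fun _ => univ) i s j))
      = Function.update (fun _ => (1:ENNReal)) i ((μ i) s) from ?_]
  · rw [Finset.prod_update_of_mem (Finset.mem_univ i)]
    simp
  · ext j
    by_cases hj : j = i
    · subst hj; simp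
    · simp [Function.update_of_ne hj, measure_univ]

end Aux

open Real Filter Set in
/-- Gaussian smoothing bias bound,
`‖E[∇h(θ + μu)] − ∇h(θ)‖ ≤ μ L₁ √S`. -/
theorem gaussian_smoothing_gradient_bias
    {S : ℕ} (hS : 1 ≤ S)
    (γ : Measure (EuclideanSpace ℝ (Fin S)))
    (hγ : Measure.map (⇑(EuclideanSpace.equiv (Fin S) ℝ)) γ
      = Measure.pi fun _ : Fin S => gaussianReal 0 1)
    (h : EuclideanSpace ℝ (Fin S) → ℝ)
    (hdiff : Differentiable ℝ h)
    (L1 : ℝ) (hL1 : 0 ≤ L1)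
    (hLipGrad : ∀ x y : EuclideanSpace ℝ (Fin S),
      ‖gradient h x - gradient h y‖ ≤ L1 * ‖x - y‖)
    (μ : ℝ) (hμ : 0 < μ) (θ : EuclideanSpace ℝ (Fin S)) :
    ‖(∫ u, gradient h (θ + μ • u) ∂γ) - gradient h θ‖ ≤ μ * L1 * Real.sqrt S := by
  set e := EuclideanSpace.equiv (Fin S) ℝ with he
  set ν := Measure.pi fun _ : Fin S => gaussianReal 0 1 with hν
  have hemeas : Measurable (⇑e) := e.continuous.measurable
  -- γ is a probability measure
  have hprob : IsProbabilityMeasure γ := by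
    constructor
    have h1 : Measure.map (⇑e) γ Set.univ = γ Set.univ := by
      rw [Measure.map_apply hemeas MeasurableSet.univ, Set.preimage_univ]
    rw [← h1, hγ]
    exact measure_univ
  -- coordinate equality
  have hcoord : ∀ (u : EuclideanSpace ℝ (Fin S)) (i : Fin S), e u i = u i := fun _ _ => rfl
  -- norm squared as sum
  have hnormsq : ∀ u : EuclideanSpace ℝ (Fin S), ‖u‖ ^ 2 = ∑ i, (u i) ^ 2 := by
    intro u
    rw [EuclideanSpace.norm_eq, Real.sq_sqrt (by positivity)]
    simp [sq_abs]
  -- integrability of coordinate squares under ν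
  have hco_int : ∀ i : Fin S, Integrable (fun x : Fin S → ℝ => (x i) ^ 2) ν := by
    intro i
    have hmap := pi_map_eval (fun _ : Fin S => gaussianReal 0 1) i
    have := (integrable_map_measure
      (by rw [hmap]; exact gaussian_sq_integrable.aestronglyMeasurable)
      (measurable_pi_apply i).aemeasurable).mp
      (by rw [hmap]; exact gaussian_sq_integrable)
    exact this
  have hco_val : ∀ i : Fin S, ∫ x : Fin S → ℝ, (x i) ^ 2 ∂ν = 1 := by
    intro i
    have hmap := pi_map_eval (fun _ : Fin S => gaussianReal 0 1) i
    rw [← gaussian_sq_integral, ← hmap,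
      integral_map (measurable_pi_apply i).aemeasurable
        (by rw [hmap]; exact gaussian_sq_integrable.aestronglyMeasurable)]
  -- sum function integrable and integral = S under ν
  have hsum_int : Integrable (fun x : Fin S → ℝ => ∑ i, (x i) ^ 2) ν :=
    integrable_finset_sum _ (fun i _ => hco_int i)
  have hsum_val : ∫ x : Fin S → ℝ, ∑ i, (x i) ^ 2 ∂ν = S := by
    rw [integral_finset_sum _ (fun i _ => hco_int i)]
    simp [hco_val]
  -- transport to γ
  have hns_int : Integrable (fun u : EuclideanSpace ℝ (Fin S) => ‖u‖ ^ 2) γ := by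
    have := (integrable_map_measure (by rw [hγ]; exact hsum_int.aestronglyMeasurable)
      hemeas.aemeasurable).mp (by rw [hγ]; exact hsum_int)
    apply this.congr
    filter_upwards with u
    rw [hnormsq u]; rfl
  have hns_val : ∫ u : EuclideanSpace ℝ (Fin S), ‖u‖ ^ 2 ∂γ = S := by
    rw [show (fun u : EuclideanSpace ℝ (Fin S) => ‖u‖ ^ 2) = fun u : EuclideanSpace ℝ (Fin S) => ∑ i, (u i) ^ 2 from funext hnormsq]
    rw [← hsum_val, ← hγ, integral_map hemeas.aemeasurable
      (by rw [hγ]; exact hsum_int.aestronglyMeasurable)]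
    rfl
  -- norm is Memℒp 2, hence integrable with mean ≤ √S
  have hmem : MemLp (fun u : EuclideanSpace ℝ (Fin S) => ‖u‖) 2 γ := by
    rw [memLp_two_iff_integrable_sq continuous_norm.aestronglyMeasurable]
    exact hns_int
  have hnorm_int : Integrable (fun u : EuclideanSpace ℝ (Fin S) => ‖u‖) γ := hmem.integrable one_le_two
  have hmean_le : ∫ u : EuclideanSpace ℝ (Fin S), ‖u‖ ∂γ ≤ Real.sqrt S := by
    have hv := variance_nonneg (fun u : EuclideanSpace ℝ (Fin S) => ‖u‖) γ
    rw [variance_eq_sub hmem] at hv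
    have hsq : (∫ u : EuclideanSpace ℝ (Fin S), ‖u‖ ∂γ) ^ 2 ≤ (S : ℝ) := by
      have : γ[(fun u : EuclideanSpace ℝ (Fin S) => ‖u‖) ^ 2] = (S : ℝ) := by
        rw [← hns_val]; congr 1
      nlinarith [hv, this]
    exact (Real.le_sqrt (integral_nonneg fun u => norm_nonneg u) (Nat.cast_nonneg S)).mpr hsq
  -- the gradient map
  set g : EuclideanSpace ℝ (Fin S) → EuclideanSpace ℝ (Fin S) := fun u => gradient h (θ + μ • u) with hg
  set c : EuclideanSpace ℝ (Fin S) := gradient h θ with hc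
  have hgrad_cont : Continuous (gradient h) := by
    have : LipschitzWith L1.toNNReal (gradient h) := by
      apply LipschitzWith.of_dist_le_mul
      intro x y
      rw [dist_eq_norm, dist_eq_norm, Real.coe_toNNReal _ hL1]
      exact hLipGrad x y
    exact this.continuous
  have hg_cont : Continuous g :=
    hgrad_cont.comp (continuous_const.add (continuous_id.const_smul μ))
  have hg_bound : ∀ u : EuclideanSpace ℝ (Fin S), ‖g u - c‖ ≤ L1 * μ * ‖u‖ := by
    intro u
    have := hLipGrad (θ + μ • u) θ
    calc ‖g u - c‖ ≤ L1 * ‖θ + μ • u - θ‖ := this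
      _ = L1 * μ * ‖u‖ := by
          rw [add_sub_cancel_left, norm_smul, Real.norm_eq_abs, abs_of_pos hμ]; ring
  have hg_int : Integrable g γ := by
    apply Integrable.mono' ((integrable_const ‖c‖).add (hnorm_int.const_mul (L1 * μ)))
      hg_cont.aestronglyMeasurable
    filter_upwards with u
    calc ‖g u‖ = ‖c + (g u - c)‖ := by rw [add_sub_cancel]
      _ ≤ ‖c‖ + ‖g u - c‖ := norm_add_le _ _
      _ ≤ ‖c‖ + L1 * μ * ‖u‖ := by linarith [hg_bound u]
  -- main chain
  have hμL : 0 ≤ L1 * μ := mul_nonneg hL1 hμ.le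
  calc ‖(∫ u, g u ∂γ) - c‖ = ‖∫ u, (g u - c) ∂γ‖ := by
        rw [integral_sub hg_int (integrable_const c), integral_const, Measure.real, measure_univ,
          ENNReal.toReal_one, one_smul]
    _ ≤ ∫ u, ‖g u - c‖ ∂γ := norm_integral_le_integral_norm _
    _ ≤ ∫ u, L1 * μ * ‖u‖ ∂γ := by
        apply integral_mono (hg_int.sub (integrable_const c)).norm
          (hnorm_int.const_mul (L1 * μ))
        intro u
        exact hg_bound u
    _ = L1 * μ * ∫ u, ‖u‖ ∂γ := integral_const_mul _ _
    _ ≤ L1 * μ * Real.sqrt S := mul_le_mul_of_nonneg_left hmean_le hμL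
    _ = μ * L1 * Real.sqrt S := by ring

end
end

section
/- Let Assumptions 1 and 2 hold, and let B_F be a constant such that ‖D(W, H)‖ ≤ B_F for all feasible W and all H with ‖H‖_F ≤ C_H. Then for every θ ∈ 𝒦, almost every ω ∈ Ω, every μ > 0, and u ∼ N(0, I_S), the zeroth-order estimator satisfies the second-moment bound E_u[ ‖ G_μ(θ, ω, u) ‖_2^2 ] ≤ 4 B_F^2 L_{h,0}^2 · S(S + 2). -/
open scoped BigOperators ComplexConjugate
open Finset MeasureTheory

noncomputable section

/-- The ZoSGA zeroth-order stochastic gradient estimator `G_μ(θ, ω, u)`. -/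
def Gest {M K S : ℕ} (α σ2 : Fin K → ℝ) {Ωs : Type}
    (Hc : EuclideanSpace ℝ (Fin S) → Ωs → Fin K → EuclideanSpace ℂ (Fin M))
    (Wstar : EuclideanSpace ℝ (Fin S) → Ωs → Fin K → EuclideanSpace ℂ (Fin M))
    (μ : ℝ) (θ : EuclideanSpace ℝ (Fin S)) (ω : Ωs) (u : EuclideanSpace ℝ (Fin S)) :
    EuclideanSpace ℝ (Fin S) :=
  ((1 / μ) * ∑ m, ∑ k,
      ((Hc (θ + μ • u) ω k m - Hc (θ - μ • u) ω k m).re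
          * (Dmat α σ2 (Wstar θ ω) (Hc θ ω) k m).re
        + (Hc (θ + μ • u) ω k m - Hc (θ - μ • u) ω k m).im
          * (Complex.I * Dmat α σ2 (Wstar θ ω) (Hc θ ω) k m).re)) • u

open Real ProbabilityTheory
open scoped ENNReal NNReal

section ZoSGAAux


lemma intg_pow (n : ℕ) : Integrable (fun x : ℝ => x ^ n * Real.exp (-(1/2) * x ^ 2)) := by
  have h := integrable_rpow_mul_exp_neg_mul_sq (b := (1/2 : ℝ)) (by norm_num)
    (s := (n : ℝ)) (by exact_mod_cast neg_one_lt_zero.trans_le (Nat.cast_nonneg n))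
  simpa [Real.rpow_natCast] using h

lemma J_rec (n : ℕ) :
    ∫ x : ℝ, x ^ (n + 2) * Real.exp (-(1/2) * x ^ 2)
      = (n + 1 : ℝ) * ∫ x : ℝ, x ^ n * Real.exp (-(1/2) * x ^ 2) := by
  have hderiv : ∀ x : ℝ, HasDerivAt (fun x : ℝ => x ^ (n+1) * Real.exp (-(1/2) * x ^ 2))
      ((n + 1 : ℝ) * x ^ n * Real.exp (-(1/2) * x ^ 2)
        - x ^ (n + 2) * Real.exp (-(1/2) * x ^ 2)) x := by
    intro x
    have h1 : HasDerivAt (fun x : ℝ => x ^ (n+1)) ((n+1 : ℝ) * x ^ n) x := by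
      simpa using hasDerivAt_pow (n+1) x
    have h2 : HasDerivAt (fun x : ℝ => Real.exp (-(1/2) * x ^ 2))
        (Real.exp (-(1/2) * x ^ 2) * (-(1/2) * (2 * x))) x := by
      have := ((hasDerivAt_pow 2 x).const_mul (-(1/2 : ℝ))).exp
      simpa using this
    have : HasDerivAt (fun x : ℝ => x ^ (n+1) * Real.exp (-(1/2) * x ^ 2)) _ x := h1.mul h2
    convert this using 1
    ring
  have hint : Integrable (fun x : ℝ => (n + 1 : ℝ) * x ^ n * Real.exp (-(1/2) * x ^ 2)
      - x ^ (n + 2) * Real.exp (-(1/2) * x ^ 2)) := by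
    have := ((intg_pow n).const_mul (n+1 : ℝ)).sub (intg_pow (n+2))
    simpa [mul_assoc, Pi.sub_def] using this
  have h0 := integral_eq_zero_of_hasDerivAt_of_integrable hderiv hint (intg_pow (n+1))
  rw [integral_sub (((intg_pow n).const_mul (n+1 : ℝ)).congr (by
      filter_upwards with x using by ring)) (intg_pow (n+2))] at h0
  have := sub_eq_zero.mp h0
  rw [← this, ← integral_const_mul]
  congr 1; funext x; ring

lemma J0 : ∫ x : ℝ, Real.exp (-(1/2) * x ^ 2) = Real.sqrt (2 * π) := by
  have := integral_gaussian (1/2 : ℝ)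
  rw [this]
  rw [show π / (1/2 : ℝ) = 2 * π by ring]

lemma pdf_eq (x : ℝ) : gaussianPDFReal 0 1 x
    = (Real.sqrt (2 * π))⁻¹ * Real.exp (-(1/2) * x ^ 2) := by
  simp only [gaussianPDFReal, NNReal.coe_one, mul_one, sub_zero]
  rw [show -x ^ 2 / 2 = -(1/2) * x ^ 2 by ring]

lemma gaussianReal_eq_wd :
    gaussianReal 0 1 = volume.withDensity
      (fun x => ((gaussianPDFReal 0 1 x).toNNReal : ℝ≥0∞)) := by
  rw [gaussianReal_of_var_ne_zero 0 one_ne_zero]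
  rfl

lemma integral_pow_gaussianReal (n : ℕ) :
    ∫ x, x ^ n ∂(gaussianReal 0 1)
      = (Real.sqrt (2 * π))⁻¹ * ∫ x : ℝ, x ^ n * Real.exp (-(1/2) * x ^ 2) := by
  rw [gaussianReal_eq_wd,
    integral_withDensity_eq_integral_smul
      ((measurable_gaussianPDFReal 0 1).real_toNNReal) (fun x => x ^ n)]
  rw [← integral_const_mul]
  congr 1; funext x
  rw [NNReal.smul_def, Real.coe_toNNReal _ (gaussianPDFReal_nonneg 0 1 x), pdf_eq,
    smul_eq_mul]
  ring

lemma integrable_pow_gaussianReal (n : ℕ) :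
    Integrable (fun x : ℝ => x ^ n) (gaussianReal 0 1) := by
  rw [gaussianReal_eq_wd, integrable_withDensity_iff_integrable_smul
    ((measurable_gaussianPDFReal 0 1).real_toNNReal)]
  have : Integrable (fun x : ℝ => (Real.sqrt (2 * π))⁻¹ * (x ^ n * Real.exp (-(1/2) * x ^ 2))) :=
    (intg_pow n).const_mul _
  refine this.congr (by
    filter_upwards with x
    rw [NNReal.smul_def, Real.coe_toNNReal _ (gaussianPDFReal_nonneg 0 1 x), pdf_eq,
      smul_eq_mul]
    ring)

lemma sqrt_two_pi_pos : 0 < Real.sqrt (2 * π) := Real.sqrt_pos.mpr (by positivity)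

lemma moment0 : ∫ x, x ^ 0 ∂(gaussianReal 0 1) = 1 := by
  rw [integral_pow_gaussianReal]
  simp only [pow_zero, one_mul]
  rw [J0, inv_mul_cancel₀ sqrt_two_pi_pos.ne']

lemma moment2 : ∫ x, x ^ 2 ∂(gaussianReal 0 1) = 1 := by
  rw [integral_pow_gaussianReal, show (2 : ℕ) = 0 + 2 from rfl, J_rec 0]
  have := moment0
  rw [integral_pow_gaussianReal] at this
  simp only [pow_zero, one_mul] at this ⊢
  rw [Nat.cast_zero, zero_add, one_mul]
  linarith [this]

lemma moment4 : ∫ x, x ^ 4 ∂(gaussianReal 0 1) = 3 := by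
  rw [integral_pow_gaussianReal, show (4 : ℕ) = 2 + 2 from rfl, J_rec 2]
  have := moment2
  rw [integral_pow_gaussianReal] at this
  rw [show ((2:ℕ) + 1 : ℝ) = 3 by norm_num]
  rw [show (Real.sqrt (2*π))⁻¹ * (3 * ∫ x : ℝ, x ^ 2 * Real.exp (-(1/2) * x ^ 2))
    = 3 * ((Real.sqrt (2*π))⁻¹ * ∫ x : ℝ, x ^ 2 * Real.exp (-(1/2) * x ^ 2)) by ring, this]
  norm_num

lemma pi_gauss_prod {S : ℕ} (g : Fin S → ℝ → ℝ) :
    ∫ x : Fin S → ℝ, ∏ i, g i (x i) ∂(Measure.pi fun _ => gaussianReal 0 1)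
      = ∏ i, ∫ t, g i t ∂(gaussianReal 0 1) := by
  letI : MeasureSpace ℝ := ⟨gaussianReal 0 1⟩
  haveI : SigmaFinite (volume : Measure ℝ) :=
    inferInstanceAs (SigmaFinite (gaussianReal 0 1))
  exact MeasureTheory.integral_fintype_prod_eq_prod (ι := Fin S) g

lemma pi_gauss_int {S : ℕ} (g : Fin S → ℝ → ℝ) (hg : ∀ i, Integrable (g i) (gaussianReal 0 1)) :
    Integrable (fun x : Fin S → ℝ => ∏ i, g i (x i)) (Measure.pi fun _ => gaussianReal 0 1) := by
  letI : MeasureSpace ℝ := ⟨gaussianReal 0 1⟩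
  haveI : SigmaFinite (volume : Measure ℝ) :=
    inferInstanceAs (SigmaFinite (gaussianReal 0 1))
  exact Integrable.fintype_prod (f := g) hg

lemma sq_sum_eq {S : ℕ} (x : Fin S → ℝ) :
    (∑ i, x i ^ 2) ^ 2
      = ∑ i, ∑ j, ∏ l, x l ^ ((if l = i then 2 else 0) + (if l = j then 2 else 0)) := by
  rw [sq, Finset.sum_mul_sum]
  refine Finset.sum_congr rfl fun i _ => Finset.sum_congr rfl fun j _ => ?_
  have h : ∀ l : Fin S, x l ^ ((if l = i then 2 else 0) + (if l = j then 2 else 0))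
      = (if l = i then x l ^ 2 else 1) * (if l = j then x l ^ 2 else 1) := by
    intro l; rw [pow_add]; split_ifs <;> simp
  rw [Finset.prod_congr rfl fun l _ => h l, Finset.prod_mul_distrib,
    Finset.prod_ite_eq', Finset.prod_ite_eq']
  simp

lemma moment4_pi (S : ℕ) :
    ∫ x : Fin S → ℝ, (∑ i, x i ^ 2) ^ 2 ∂(Measure.pi fun _ => gaussianReal 0 1)
      = (S : ℝ) * ((S : ℝ) + 2) := by
  have hint : ∀ i j : Fin S, Integrable (fun x : Fin S → ℝ =>
      ∏ l, x l ^ ((if l = i then 2 else 0) + (if l = j then 2 else 0)))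
      (Measure.pi fun _ => gaussianReal 0 1) :=
    fun i j => pi_gauss_int _ (fun l => integrable_pow_gaussianReal _)
  calc ∫ x : Fin S → ℝ, (∑ i, x i ^ 2) ^ 2 ∂(Measure.pi fun _ => gaussianReal 0 1)
      = ∑ i, ∑ j, ∫ x : Fin S → ℝ,
          ∏ l, x l ^ ((if l = i then 2 else 0) + (if l = j then 2 else 0))
          ∂(Measure.pi fun _ => gaussianReal 0 1) := by
        simp_rw [sq_sum_eq]
        rw [integral_finset_sum _
          (fun i _ => integrable_finset_sum _ (fun j _ => hint i j))]
        exact Finset.sum_congr rfl fun i _ => integral_finset_sum _ fun j _ => hint i j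
    _ = ∑ i : Fin S, ∑ j : Fin S, if i = j then (3:ℝ) else 1 := by
        refine Finset.sum_congr rfl fun i _ => Finset.sum_congr rfl fun j _ => ?_
        rw [pi_gauss_prod (fun l t => t ^ ((if l = i then 2 else 0) + (if l = j then 2 else 0)))]
        by_cases hij : i = j
        · subst hij
          simp only [if_pos rfl]
          have h : ∀ l : Fin S,
              (∫ t, t ^ ((if l = i then 2 else 0) + (if l = i then 2 else 0))
                ∂(gaussianReal 0 1)) = if l = i then (3:ℝ) else 1 := by
            intro l; split_ifs with hl
            · simpa using moment4
            · simpa using moment0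
          rw [Finset.prod_congr rfl fun l _ => h l, Finset.prod_ite_eq']
          simp
        · simp only [if_neg hij]
          have h : ∀ l : Fin S,
              (∫ t, t ^ ((if l = i then 2 else 0) + (if l = j then 2 else 0))
                ∂(gaussianReal 0 1)) = 1 := by
            intro l
            by_cases h1 : l = i <;> by_cases h2 : l = j
            · exact absurd (h1 ▸ h2) hij
            · simp only [if_pos h1, if_neg h2]; simpa using moment2
            · simp only [if_neg h1, if_pos h2]; simpa using moment2
            · simp only [if_neg h1, if_neg h2]; simpa using moment0
          rw [Finset.prod_congr rfl fun l _ => h l, Finset.prod_const_one]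
    _ = (S : ℝ) * ((S : ℝ) + 2) := by
        have h : ∀ i : Fin S, (∑ j : Fin S, if i = j then (3:ℝ) else 1) = (S : ℝ) + 2 := by
          intro i
          have h2 : (fun j : Fin S => if i = j then (3:ℝ) else 1)
              = fun j => 1 + (if i = j then 2 else 0) := by
            funext j; split_ifs <;> norm_num
          rw [h2, Finset.sum_add_distrib, Finset.sum_const, Finset.card_univ,
            Finset.sum_ite_eq]
          simp
        rw [Finset.sum_congr rfl fun i _ => h i, Finset.sum_const, Finset.card_univ]
        simp only [Fintype.card_fin, nsmul_eq_mul]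

lemma integrable4_pi (S : ℕ) :
    Integrable (fun x : Fin S → ℝ => (∑ i, x i ^ 2) ^ 2)
      (Measure.pi fun _ => gaussianReal 0 1) := by
  have h : (fun x : Fin S → ℝ => (∑ i, x i ^ 2) ^ 2)
      = fun x => ∑ i, ∑ j, ∏ l, x l ^ ((if l = i then 2 else 0) + (if l = j then 2 else 0)) :=
    funext sq_sum_eq
  rw [h]
  exact integrable_finset_sum _ fun i _ => integrable_finset_sum _ fun j _ =>
    pi_gauss_int _ (fun l => integrable_pow_gaussianReal _)


lemma gamma_moment {S : ℕ} (γ : Measure (EuclideanSpace ℝ (Fin S)))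
    (hγ : Measure.map (⇑(EuclideanSpace.equiv (Fin S) ℝ)) γ
      = Measure.pi fun _ : Fin S => gaussianReal 0 1) :
    (∫ u, ‖u‖ ^ 4 ∂γ) = (S : ℝ) * ((S : ℝ) + 2)
      ∧ Integrable (fun u : EuclideanSpace ℝ (Fin S) => ‖u‖ ^ 4) γ := by
  set e := (MeasurableEquiv.toLp 2 (Fin S → ℝ)).symm with he
  have hγ' : Measure.map (⇑e) γ = Measure.pi fun _ : Fin S => gaussianReal 0 1 := hγ
  have hg : γ = Measure.map (⇑e.symm) (Measure.pi fun _ : Fin S => gaussianReal 0 1) := by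
    rw [← hγ']
    exact (MeasurableEquiv.map_symm_map e).symm
  have hnorm : ∀ x : Fin S → ℝ, ‖e.symm x‖ ^ 4 = (∑ i, x i ^ 2) ^ 2 := by
    intro x
    rw [EuclideanSpace.norm_eq, show (4:ℕ) = 2 * 2 from rfl, pow_mul,
      Real.sq_sqrt (by positivity)]
    congr 1
    refine Finset.sum_congr rfl fun i _ => ?_
    have : (e.symm x) i = x i := rfl
    rw [this, Real.norm_eq_abs, sq_abs]
  have hfun : (fun x : Fin S → ℝ => ‖e.symm x‖ ^ 4) = fun x => (∑ i, x i ^ 2) ^ 2 :=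
    funext hnorm
  constructor
  · rw [hg, integral_map_equiv]
    calc ∫ x : Fin S → ℝ, ‖e.symm x‖ ^ 4 ∂(Measure.pi fun _ => gaussianReal 0 1)
        = ∫ x : Fin S → ℝ, (∑ i, x i ^ 2) ^ 2 ∂(Measure.pi fun _ => gaussianReal 0 1) := by
          rw [hfun]
      _ = (S : ℝ) * ((S : ℝ) + 2) := moment4_pi S
  · rw [hg, integrable_map_equiv]
    have : ((fun u : EuclideanSpace ℝ (Fin S) => ‖u‖ ^ 4) ∘ ⇑e.symm)
        = fun x : Fin S → ℝ => (∑ i, x i ^ 2) ^ 2 := hfun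
    rw [this]
    exact integrable4_pi S


lemma prod_sum_eq {M K : ℕ} (f : Fin M → Fin K → ℝ) :
    ∑ p : Fin M × Fin K, f p.1 p.2 = ∑ m, ∑ k, f m k := by
  rw [← Finset.univ_product_univ, Finset.sum_product']

set_option maxHeartbeats 1000000 in
lemma scalar_sq_bound {M K : ℕ} (Δ : Fin K → EuclideanSpace ℂ (Fin M)) (D : Fin K → Fin M → ℂ) :
    (∑ m, ∑ k, ((Δ k m).re * (D k m).re + (Δ k m).im * (Complex.I * D k m).re)) ^ 2
      ≤ (∑ k, ‖Δ k‖ ^ 2) * (∑ k, ∑ m, ‖D k m‖ ^ 2) := by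
  have habs : ∀ (m : Fin M) (k : Fin K),
      |(Δ k m).re * (D k m).re + (Δ k m).im * (Complex.I * D k m).re|
        ≤ ‖Δ k m‖ * ‖D k m‖ := by
    intro m k
    have h1 : (Δ k m).re * (D k m).re + (Δ k m).im * (Complex.I * D k m).re
        = (Δ k m * D k m).re := by
      simp only [Complex.mul_re, Complex.I_re, Complex.I_im]
      ring
    rw [h1]
    calc |(Δ k m * D k m).re| ≤ ‖Δ k m * D k m‖ := Complex.abs_re_le_norm _
      _ = ‖Δ k m‖ * ‖D k m‖ := norm_mul _ _
  have e0 : (∑ m, ∑ k, ((Δ k m).re * (D k m).re + (Δ k m).im * (Complex.I * D k m).re))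
      = ∑ p : Fin M × Fin K,
          ((Δ p.2 p.1).re * (D p.2 p.1).re + (Δ p.2 p.1).im * (Complex.I * D p.2 p.1).re) :=
    (prod_sum_eq _).symm
  have e1 : (∑ p : Fin M × Fin K, ‖Δ p.2 p.1‖ ^ 2) = ∑ k, ‖Δ k‖ ^ 2 := by
    rw [prod_sum_eq (fun m k => ‖Δ k m‖ ^ 2), Finset.sum_comm]
    refine Finset.sum_congr rfl fun k _ => ?_
    rw [EuclideanSpace.norm_eq]
    exact (Real.sq_sqrt (by positivity)).symm
  have e2 : (∑ p : Fin M × Fin K, ‖D p.2 p.1‖ ^ 2) = ∑ k, ∑ m, ‖D k m‖ ^ 2 := by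
    rw [prod_sum_eq (fun m k => ‖D k m‖ ^ 2), Finset.sum_comm]
  have hTabs : |∑ p : Fin M × Fin K,
        ((Δ p.2 p.1).re * (D p.2 p.1).re + (Δ p.2 p.1).im * (Complex.I * D p.2 p.1).re)|
      ≤ ∑ p : Fin M × Fin K, ‖Δ p.2 p.1‖ * ‖D p.2 p.1‖ :=
    (Finset.abs_sum_le_sum_abs _ _).trans (Finset.sum_le_sum fun p _ => habs p.1 p.2)
  rw [e0, ← e1, ← e2]
  calc (∑ p : Fin M × Fin K,
          ((Δ p.2 p.1).re * (D p.2 p.1).re + (Δ p.2 p.1).im * (Complex.I * D p.2 p.1).re)) ^ 2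
      ≤ (∑ p : Fin M × Fin K, ‖Δ p.2 p.1‖ * ‖D p.2 p.1‖) ^ 2 := by
        rw [← sq_abs]
        exact pow_le_pow_left₀ (abs_nonneg _) hTabs 2
    _ ≤ (∑ p : Fin M × Fin K, ‖Δ p.2 p.1‖ ^ 2) * (∑ p : Fin M × Fin K, ‖D p.2 p.1‖ ^ 2) :=
        Finset.sum_mul_sq_le_sq_mul_sq _ _ _


set_option maxHeartbeats 400000 in
lemma Gest_bound {M K S : ℕ} (α σ2 : Fin K → ℝ) {Ωs : Type}
    (Hc : EuclideanSpace ℝ (Fin S) → Ωs → Fin K → EuclideanSpace ℂ (Fin M))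
    (Wstar : EuclideanSpace ℝ (Fin S) → Ωs → Fin K → EuclideanSpace ℂ (Fin M))
    (μ : ℝ) (hμ : 0 < μ) (θ u : EuclideanSpace ℝ (Fin S)) (ω : Ωs)
    (L0 B_F : ℝ)
    (hfr : frobNorm (fun k => Hc (θ + μ • u) ω k - Hc (θ - μ • u) ω k) ≤ 2 * μ * L0 * ‖u‖)
    (hD : normD α σ2 (Wstar θ ω) (Hc θ ω) ≤ B_F) :
    ‖Gest α σ2 Hc Wstar μ θ ω u‖ ^ 2 ≤ 4 * B_F ^ 2 * L0 ^ 2 * ‖u‖ ^ 4 := by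
  have hD2 : normD α σ2 (Wstar θ ω) (Hc θ ω) ^ 2
      = ∑ k, ∑ m, ‖Dmat α σ2 (Wstar θ ω) (Hc θ ω) k m‖ ^ 2 :=
    Real.sq_sqrt (by positivity)
  have hfr2 : frobNorm (fun k => Hc (θ + μ • u) ω k - Hc (θ - μ • u) ω k) ^ 2
      = ∑ k, ‖Hc (θ + μ • u) ω k - Hc (θ - μ • u) ω k‖ ^ 2 :=
    Real.sq_sqrt (by positivity)
  have key := scalar_sq_bound (fun k => Hc (θ + μ • u) ω k - Hc (θ - μ • u) ω k)
    (fun k m => Dmat α σ2 (Wstar θ ω) (Hc θ ω) k m)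
  simp only [PiLp.sub_apply] at key
  rw [← hfr2, ← hD2] at key
  have h1 : (∑ m, ∑ k,
      ((Hc (θ + μ • u) ω k m - Hc (θ - μ • u) ω k m).re
          * (Dmat α σ2 (Wstar θ ω) (Hc θ ω) k m).re
        + (Hc (θ + μ • u) ω k m - Hc (θ - μ • u) ω k m).im
          * (Complex.I * Dmat α σ2 (Wstar θ ω) (Hc θ ω) k m).re)) ^ 2
      ≤ (2 * μ * L0 * ‖u‖) ^ 2 * B_F ^ 2 := by
    refine key.trans ?_
    exact mul_le_mul (pow_le_pow_left₀ (Real.sqrt_nonneg _) hfr 2)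
      (pow_le_pow_left₀ (Real.sqrt_nonneg _) hD 2) (by positivity) (by positivity)
  have hG : Gest α σ2 Hc Wstar μ θ ω u = ((1 / μ) * ∑ m, ∑ k,
      ((Hc (θ + μ • u) ω k m - Hc (θ - μ • u) ω k m).re
          * (Dmat α σ2 (Wstar θ ω) (Hc θ ω) k m).re
        + (Hc (θ + μ • u) ω k m - Hc (θ - μ • u) ω k m).im
          * (Complex.I * Dmat α σ2 (Wstar θ ω) (Hc θ ω) k m).re)) • u := rfl
  rw [hG, norm_smul, mul_pow, Real.norm_eq_abs, sq_abs]
  set T : ℝ := ∑ m, ∑ k,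
      ((Hc (θ + μ • u) ω k m - Hc (θ - μ • u) ω k m).re
          * (Dmat α σ2 (Wstar θ ω) (Hc θ ω) k m).re
        + (Hc (θ + μ • u) ω k m - Hc (θ - μ • u) ω k m).im
          * (Complex.I * Dmat α σ2 (Wstar θ ω) (Hc θ ω) k m).re) with hTdef
  calc (1 / μ * T) ^ 2 * ‖u‖ ^ 2 = T ^ 2 * ((1 / μ) ^ 2 * ‖u‖ ^ 2) := by ring
    _ ≤ ((2 * μ * L0 * ‖u‖) ^ 2 * B_F ^ 2) * ((1 / μ) ^ 2 * ‖u‖ ^ 2) :=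
        mul_le_mul_of_nonneg_right h1 (by positivity)
    _ = 4 * B_F ^ 2 * L0 ^ 2 * ‖u‖ ^ 4 * (μ * μ⁻¹) ^ 2 := by rw [one_div]; ring
    _ = 4 * B_F ^ 2 * L0 ^ 2 * ‖u‖ ^ 4 := by
        rw [mul_inv_cancel₀ hμ.ne', one_pow, mul_one]

end ZoSGAAux

/-- second-moment bound for the ZoSGA estimator,
`E_u[‖G_μ(θ,ω,u)‖²] ≤ 4 B_F² L₀² S(S+2)`. -/
theorem zosga_estimator_second_moment
    {M K S : ℕ} (hM : 1 ≤ M) (hK : 1 ≤ K) (hS : 1 ≤ S)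
    (α σ2 : Fin K → ℝ) (hα : ∀ k, 0 ≤ α k) (hσ : ∀ k, 0 < σ2 k)
    (P : ℝ) (hP : 0 < P)
    {Ωs : Type} [MeasurableSpace Ωs] (Pm : Measure Ωs) [IsProbabilityMeasure Pm]
    (Hc : EuclideanSpace ℝ (Fin S) → Ωs → Fin K → EuclideanSpace ℂ (Fin M))
    (C_H L0 L1 : ℝ) (hCH : 0 < C_H)
    -- Assumption 2
    (hA2 : ∀ᵐ ω ∂Pm,
      ContDiff ℝ 2 (fun θ => Hc θ ω) ∧
      (∀ θ, frobNorm (Hc θ ω) ≤ C_H) ∧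
      (∀ θ1 θ2 : EuclideanSpace ℝ (Fin S),
        frobNorm (fun k => Hc θ1 ω k - Hc θ2 ω k) ≤ L0 * ‖θ1 - θ2‖) ∧
      (∀ (k : Fin K) (m : Fin M) (θ1 θ2 : EuclideanSpace ℝ (Fin S)),
        ‖fderiv ℝ (fun x => Hc x ω k m) θ1 - fderiv ℝ (fun x => Hc x ω k m) θ2‖
          ≤ L1 * ‖θ1 - θ2‖))
    (Kset : Set (EuclideanSpace ℝ (Fin S))) (hKne : Kset.Nonempty) (hKcpt : IsCompact Kset)
    (Wstar : EuclideanSpace ℝ (Fin S) → Ωs → Fin K → EuclideanSpace ℂ (Fin M))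
    -- Assumption 1
    (hA1 : ∀ θ ∈ Kset, ∀ᵐ ω ∂Pm,
      (∑ k, ‖Wstar θ ω k‖ ^ 2 ≤ P) ∧
      ∀ W : Fin K → EuclideanSpace ℂ (Fin M), (∑ k, ‖W k‖ ^ 2 ≤ P) →
        sumrateF α σ2 W (Hc θ ω) ≤ sumrateF α σ2 (Wstar θ ω) (Hc θ ω))
    (B_F : ℝ)
    (hBF : ∀ W H : Fin K → EuclideanSpace ℂ (Fin M),
      (∑ k, ‖W k‖ ^ 2 ≤ P) → frobNorm H ≤ C_H → normD α σ2 W H ≤ B_F)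
    -- standard Gaussian measure on ℝ^S
    (γ : Measure (EuclideanSpace ℝ (Fin S)))
    (hγ : Measure.map (⇑(EuclideanSpace.equiv (Fin S) ℝ)) γ
      = Measure.pi fun _ : Fin S => ProbabilityTheory.gaussianReal 0 1) :
    ∀ θ ∈ Kset, ∀ᵐ ω ∂Pm, ∀ μ : ℝ, 0 < μ →
      (∫ u, ‖Gest α σ2 Hc Wstar μ θ ω u‖ ^ 2 ∂γ)
        ≤ 4 * B_F ^ 2 * L0 ^ 2 * ((S : ℝ) * ((S : ℝ) + 2)) := by
  intro θ hθ
  filter_upwards [hA2, hA1 θ hθ] with ω h2 h1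
  intro μ hμ
  obtain ⟨-, hCHb, hLip, -⟩ := h2
  obtain ⟨hWfeas, -⟩ := h1
  have hDb : normD α σ2 (Wstar θ ω) (Hc θ ω) ≤ B_F := hBF _ _ hWfeas (hCHb θ)
  have key : ∀ u : EuclideanSpace ℝ (Fin S),
      ‖Gest α σ2 Hc Wstar μ θ ω u‖ ^ 2 ≤ 4 * B_F ^ 2 * L0 ^ 2 * ‖u‖ ^ 4 := by
    intro u
    refine Gest_bound α σ2 Hc Wstar μ hμ θ u ω L0 B_F ?_ hDb
    have h := hLip (θ + μ • u) (θ - μ • u)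
    have heq : (θ + μ • u) - (θ - μ • u) = (2 * μ) • u := by module
    rw [heq, norm_smul] at h
    refine h.trans (le_of_eq ?_)
    rw [Real.norm_eq_abs, abs_of_pos (by linarith)]
    ring
  obtain ⟨hmom, hint⟩ := gamma_moment γ hγ
  calc (∫ u, ‖Gest α σ2 Hc Wstar μ θ ω u‖ ^ 2 ∂γ)
      ≤ ∫ u, 4 * B_F ^ 2 * L0 ^ 2 * ‖u‖ ^ 4 ∂γ :=
        integral_mono_of_nonneg (Filter.Eventually.of_forall fun u => by positivity)
          (hint.const_mul _) (Filter.Eventually.of_forall key)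
    _ = 4 * B_F ^ 2 * L0 ^ 2 * ∫ u, ‖u‖ ^ 4 ∂γ := integral_const_mul _ _
    _ = 4 * B_F ^ 2 * L0 ^ 2 * ((S : ℝ) * ((S : ℝ) + 2)) := by rw [hmom]

end
end
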